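/- Let M = [[A, b],[0, 0]] where A is invertible with A⁻¹ ≤ 0 entrywise and b ≤ 0. Let q = (p, qₙ) with p ∈ ℝⁿ, p ≤ 0 and qₙ ≥ 0. Then the linear complementarity problem LCP(−M, q) has a solution: v = (A⁻¹p, 0) satisfies v ≥ 0, −Mv + q ≥ 0, and vᵀ(−Mv + q) = 0. -/

import Mathlib

open Matrix

/-- For `M = [[A, b],[0, 0]]` with `A⁻¹ ≤ 0`, `b ≤ 0`, and `q = (p, qₙ)` with
`p ≤ 0`, `qₙ ≥ 0`, the vector `v = (A⁻¹p, 0)` solves `LCP(−M, q)`. -/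
theorem stmt_13 (n : ℕ) (A : Matrix (Fin n) (Fin n) ℝ)
    (hAinv : IsUnit A.det)
    (hAneg : ∀ i j, A⁻¹ i j ≤ 0)
    (b : Fin n → ℝ) (hb : ∀ i, b i ≤ 0)
    (M : Matrix (Fin n ⊕ Fin 1) (Fin n ⊕ Fin 1) ℝ)
    (hM : M = Matrix.fromBlocks A (fun i _ => b i) 0 0)
    (p : Fin n → ℝ) (hp : ∀ i, p i ≤ 0) (qn : ℝ) (hqn : 0 ≤ qn)
    (q v : Fin n ⊕ Fin 1 → ℝ)
    (hq : q = Sum.elim p (fun _ => qn))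
    (hv : v = Sum.elim (A⁻¹ *ᵥ p) (fun _ => 0)) :
    (∀ i, 0 ≤ v i) ∧ (∀ i, 0 ≤ ((-M) *ᵥ v + q) i) ∧
      v ⬝ᵥ ((-M) *ᵥ v + q) = 0 := by
  have hvnn : ∀ i, 0 ≤ v i := by
    intro i
    subst hv
    cases i with
    | inl i =>
      simp only [Sum.elim_inl, mulVec, dotProduct]
      refine Finset.sum_nonneg fun j _ => ?_
      have := mul_nonneg (neg_nonneg.mpr (hAneg i j)) (neg_nonneg.mpr (hp j))
      linarith
    | inr i => simp
  have hMv : M *ᵥ v = Sum.elim p (fun _ => 0) := by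
    subst hM hv
    change fromBlocks A (Matrix.of fun i _ => b i) 0 0 *ᵥ _ = _
    rw [fromBlocks_mulVec, Sum.elim_comp_inl, Sum.elim_comp_inr,
      mulVec_mulVec, mul_nonsing_inv A hAinv, one_mulVec]
    ext i
    cases i <;> simp [mulVec, dotProduct]
  have hw : (-M) *ᵥ v + q = Sum.elim (fun _ => (0:ℝ)) (fun _ => qn) := by
    subst hq
    rw [neg_mulVec, hMv]
    ext i
    cases i <;> simp
  refine ⟨hvnn, ?_, ?_⟩
  · intro i
    rw [hw]
    cases i with
    | inl i => simp
    | inr i => simpa using hqn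
  · rw [hw]
    subst hv
    simp [dotProduct]
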